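/- arXiv:1602.00100 — 2 statements merged into one kernel-verified Lean document; each statement's English description precedes it below -/
import Mathlib

section
/- Let m ≥ 2 and let u : ℝ^m \ {0} → ℝ be a C² function, positively homogeneous of degree 0 (u(t x) = u(x) for all t > 0, x ≠ 0), which solves the vertical mean curvature equation for a positive continuous function K : ℝ^m \ {0} → (0, ∞). Suppose there exist reals 0 < r₁ ≤ 1 ≤ r₂ such that K(ξ) > (m−1)/‖ξ‖ whenever 0 < ‖ξ‖ < r₁ and K(ξ) < (m−1)/‖ξ‖ whenever ‖ξ‖ > r₂. Then log r₁ ≤ u(ξ) ≤ log r₂ for every ξ with ‖ξ‖ = 1. -/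
open Filter Topology Set

private lemma second_deriv_nonpos_of_isLocalMax' {g : ℝ → ℝ} {c : ℝ}
    (hmax : IsLocalMax g 0)
    (hg : ∀ᶠ t in 𝓝 (0:ℝ), DifferentiableAt ℝ g t)
    (hc : HasDerivAt (deriv g) c 0) : c ≤ 0 := by
  by_contra hc0
  push_neg at hc0
  have hd0 : deriv g 0 = 0 := hmax.deriv_eq_zero
  have hslope : Tendsto (slope (deriv g) 0) (𝓝[≠] 0) (𝓝 c) :=
    hasDerivAt_iff_tendsto_slope.1 hc
  have hpos : ∀ᶠ t in 𝓝[≠] (0:ℝ), 0 < slope (deriv g) 0 t :=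
    hslope.eventually (eventually_gt_nhds hc0)
  rcases Metric.mem_nhdsWithin_iff.1 hpos with ⟨ε₁, hε₁, h1⟩
  rcases Metric.eventually_nhds_iff.1 (hg.and hmax) with ⟨ε₂, hε₂, h2⟩
  set b : ℝ := min ε₁ ε₂ / 2 with hb
  have hb0 : 0 < b := by positivity
  have hbε₁ : b < ε₁ := by
    have : b < min ε₁ ε₂ := by simpa [hb] using half_lt_self (lt_min hε₁ hε₂)
    exact this.trans_le (min_le_left _ _)
  have hbε₂ : b < ε₂ := by
    have : b < min ε₁ ε₂ := by simpa [hb] using half_lt_self (lt_min hε₁ hε₂)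
    exact this.trans_le (min_le_right _ _)
  have hmono : StrictMonoOn g (Icc 0 b) := by
    apply strictMonoOn_of_deriv_pos (convex_Icc 0 b)
    · intro t ht
      have : DifferentiableAt ℝ g t := by
        refine (h2 ?_).1
        rw [Real.dist_eq, sub_zero, abs_of_nonneg ht.1]
        exact lt_of_le_of_lt ht.2 hbε₂
      exact this.continuousAt.continuousWithinAt
    · intro t ht
      rw [interior_Icc] at ht
      have ht0 : (0:ℝ) < t := ht.1
      have hs : 0 < slope (deriv g) 0 t := by
        apply h1
        constructor
        · rw [Metric.mem_ball, Real.dist_eq, sub_zero, abs_of_pos ht0]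
          exact ht.2.trans hbε₁
        · exact ne_of_gt ht0
      rw [slope_def_field, hd0, sub_zero, sub_zero] at hs
      have := mul_pos hs ht0
      rwa [div_mul_cancel₀ _ (ne_of_gt ht0)] at this
  have hlt : g 0 < g b := hmono ⟨le_rfl, le_of_lt hb0⟩ ⟨le_of_lt hb0, le_rfl⟩ hb0
  have hle : g b ≤ g 0 := by
    refine (h2 ?_).2
    rw [Real.dist_eq, sub_zero, abs_of_pos hb0]
    exact hbε₂
  exact absurd hle (not_le.2 hlt)

private lemma second_deriv_nonneg_of_isLocalMin' {g : ℝ → ℝ} {c : ℝ}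
    (hmin : IsLocalMin g 0)
    (hg : ∀ᶠ t in 𝓝 (0:ℝ), DifferentiableAt ℝ g t)
    (hc : HasDerivAt (deriv g) c 0) : 0 ≤ c := by
  by_contra hc0
  push_neg at hc0
  have hd0 : deriv g 0 = 0 := hmin.deriv_eq_zero
  have hslope : Tendsto (slope (deriv g) 0) (𝓝[≠] 0) (𝓝 c) :=
    hasDerivAt_iff_tendsto_slope.1 hc
  have hpos : ∀ᶠ t in 𝓝[≠] (0:ℝ), slope (deriv g) 0 t < 0 :=
    hslope.eventually (eventually_lt_nhds hc0)
  rcases Metric.mem_nhdsWithin_iff.1 hpos with ⟨ε₁, hε₁, h1⟩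
  rcases Metric.eventually_nhds_iff.1 (hg.and hmin) with ⟨ε₂, hε₂, h2⟩
  set b : ℝ := min ε₁ ε₂ / 2 with hb
  have hb0 : 0 < b := by positivity
  have hbε₁ : b < ε₁ := by
    have : b < min ε₁ ε₂ := by simpa [hb] using half_lt_self (lt_min hε₁ hε₂)
    exact this.trans_le (min_le_left _ _)
  have hbε₂ : b < ε₂ := by
    have : b < min ε₁ ε₂ := by simpa [hb] using half_lt_self (lt_min hε₁ hε₂)
    exact this.trans_le (min_le_right _ _)
  have hmono : StrictAntiOn g (Icc 0 b) := by
    apply strictAntiOn_of_deriv_neg (convex_Icc 0 b)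
    · intro t ht
      have : DifferentiableAt ℝ g t := by
        refine (h2 ?_).1
        rw [Real.dist_eq, sub_zero, abs_of_nonneg ht.1]
        exact lt_of_le_of_lt ht.2 hbε₂
      exact this.continuousAt.continuousWithinAt
    · intro t ht
      rw [interior_Icc] at ht
      have ht0 : (0:ℝ) < t := ht.1
      have hs : slope (deriv g) 0 t < 0 := by
        apply h1
        constructor
        · rw [Metric.mem_ball, Real.dist_eq, sub_zero, abs_of_pos ht0]
          exact ht.2.trans hbε₁
        · exact ne_of_gt ht0
      rw [slope_def_field, hd0, sub_zero, sub_zero] at hs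
      have := mul_neg_of_neg_of_pos hs ht0
      rwa [div_mul_cancel₀ _ (ne_of_gt ht0)] at this
  have hlt : g b < g 0 := hmono ⟨le_rfl, le_of_lt hb0⟩ ⟨le_of_lt hb0, le_rfl⟩ hb0
  have hle : g 0 ≤ g b := by
    refine (h2 ?_).2
    rw [Real.dist_eq, sub_zero, abs_of_pos hb0]
    exact hbε₂
  exact absurd hle (not_le.2 hlt)

section SecondFDeriv

variable {E : Type*} [NormedAddCommGroup E] [NormedSpace ℝ E]

private lemma second_fderiv_nonpos_of_isLocalMax' {u : E → ℝ} {x : E}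
    (hu : ContDiffAt ℝ 2 u x) (hmax : IsLocalMax u x) (v : E) :
    fderiv ℝ (fderiv ℝ u) x v v ≤ 0 := by
  set φ : ℝ → E := fun t => x + t • v with hφ
  have hφ0 : φ 0 = x := by simp [hφ]
  have hφc : Tendsto φ (𝓝 0) (𝓝 x) := by
    have : Continuous φ := by fun_prop
    simpa [hφ0] using this.tendsto 0
  have hφd : ∀ t : ℝ, HasDerivAt φ v t := fun t => by
    simpa [hφ] using ((hasDerivAt_id t).smul_const v).const_add x
  have hdiff : ∀ᶠ y in 𝓝 x, DifferentiableAt ℝ u y := by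
    filter_upwards [hu.eventually (by norm_num)] with y hy
    exact hy.differentiableAt (by norm_num)
  have hD : HasFDerivAt (fderiv ℝ u) (fderiv ℝ (fderiv ℝ u) x) x := by
    have h1 : ContDiffAt ℝ 1 (fderiv ℝ u) x := hu.fderiv_right le_rfl
    exact (h1.differentiableAt (by norm_num)).hasFDerivAt
  set g : ℝ → ℝ := fun t => u (φ t) with hg
  have hgmax : IsLocalMax g 0 := by
    have := hφc.eventually hmax
    simpa [IsLocalMax, IsMaxFilter, hg, hφ0] using this
  have hgd : ∀ᶠ t in 𝓝 (0:ℝ), HasDerivAt g ((fderiv ℝ u (φ t)) v) t := by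
    filter_upwards [hφc.eventually hdiff] with t ht
    exact ht.hasFDerivAt.comp_hasDerivAt t (hφd t)
  have hderiv_eq : (fun t => (fderiv ℝ u (φ t)) v) =ᶠ[𝓝 (0:ℝ)] deriv g :=
    hgd.mono fun t ht => ht.deriv.symm
  have h2 : HasDerivAt (fun t => fderiv ℝ u (φ t)) (fderiv ℝ (fderiv ℝ u) x v) 0 := by
    have hD' : HasFDerivAt (fderiv ℝ u) (fderiv ℝ (fderiv ℝ u) x) (φ 0) := by
      rw [hφ0]; exact hD
    have := hD'.comp_hasDerivAt 0 (hφd 0)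
    exact this
  have hF : HasDerivAt (fun t => (fderiv ℝ u (φ t)) v)
      ((fderiv ℝ (fderiv ℝ u) x v) v) 0 := by
    have := h2.clm_apply (hasDerivAt_const 0 v)
    simpa using this
  exact second_deriv_nonpos_of_isLocalMax' hgmax
    (hgd.mono fun t ht => ht.differentiableAt)
    (hF.congr_of_eventuallyEq hderiv_eq.symm)

private lemma second_fderiv_nonneg_of_isLocalMin' {u : E → ℝ} {x : E}
    (hu : ContDiffAt ℝ 2 u x) (hmin : IsLocalMin u x) (v : E) :
    0 ≤ fderiv ℝ (fderiv ℝ u) x v v := by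
  set φ : ℝ → E := fun t => x + t • v with hφ
  have hφ0 : φ 0 = x := by simp [hφ]
  have hφc : Tendsto φ (𝓝 0) (𝓝 x) := by
    have : Continuous φ := by fun_prop
    simpa [hφ0] using this.tendsto 0
  have hφd : ∀ t : ℝ, HasDerivAt φ v t := fun t => by
    simpa [hφ] using ((hasDerivAt_id t).smul_const v).const_add x
  have hdiff : ∀ᶠ y in 𝓝 x, DifferentiableAt ℝ u y := by
    filter_upwards [hu.eventually (by norm_num)] with y hy
    exact hy.differentiableAt (by norm_num)
  have hD : HasFDerivAt (fderiv ℝ u) (fderiv ℝ (fderiv ℝ u) x) x := by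
    have h1 : ContDiffAt ℝ 1 (fderiv ℝ u) x := hu.fderiv_right le_rfl
    exact (h1.differentiableAt (by norm_num)).hasFDerivAt
  set g : ℝ → ℝ := fun t => u (φ t) with hg
  have hgmin : IsLocalMin g 0 := by
    have := hφc.eventually hmin
    simpa [IsLocalMin, IsMinFilter, hg, hφ0] using this
  have hgd : ∀ᶠ t in 𝓝 (0:ℝ), HasDerivAt g ((fderiv ℝ u (φ t)) v) t := by
    filter_upwards [hφc.eventually hdiff] with t ht
    exact ht.hasFDerivAt.comp_hasDerivAt t (hφd t)
  have hderiv_eq : (fun t => (fderiv ℝ u (φ t)) v) =ᶠ[𝓝 (0:ℝ)] deriv g :=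
    hgd.mono fun t ht => ht.deriv.symm
  have h2 : HasDerivAt (fun t => fderiv ℝ u (φ t)) (fderiv ℝ (fderiv ℝ u) x v) 0 := by
    have hD' : HasFDerivAt (fderiv ℝ u) (fderiv ℝ (fderiv ℝ u) x) (φ 0) := by
      rw [hφ0]; exact hD
    have := hD'.comp_hasDerivAt 0 (hφd 0)
    exact this
  have hF : HasDerivAt (fun t => (fderiv ℝ u (φ t)) v)
      ((fderiv ℝ (fderiv ℝ u) x v) v) 0 := by
    have := h2.clm_apply (hasDerivAt_const 0 v)
    simpa using this
  exact second_deriv_nonneg_of_isLocalMin' hgmin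
    (hgd.mono fun t ht => ht.differentiableAt)
    (hF.congr_of_eventuallyEq hderiv_eq.symm)

end SecondFDeriv



/-- `u` solves the vertical mean curvature equation for `K`: for every unit vector `ξ`,
`(1 + ‖∇u‖²) Δu − D²u(∇u, ∇u) = (m−1)(1 + ‖∇u‖²) − (1 + ‖∇u‖²)^{3/2} e^u K(e^u ξ)`,
where `∇u` is the gradient, `D²u` the Hessian, and `Δu` the Laplacian (trace of the
Hessian over the standard orthonormal basis). -/
def SolvesVerticalMeanCurvatureEq (m : ℕ)
    (u K : EuclideanSpace ℝ (Fin m) → ℝ) : Prop :=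
  ∀ ξ : EuclideanSpace ℝ (Fin m), ‖ξ‖ = 1 →
    (1 + ‖gradient u ξ‖ ^ 2) *
        (∑ i : Fin m, fderiv ℝ (fderiv ℝ u) ξ (EuclideanSpace.single i 1)
          (EuclideanSpace.single i 1))
      - fderiv ℝ (fderiv ℝ u) ξ (gradient u ξ) (gradient u ξ)
    = (m - 1 : ℝ) * (1 + ‖gradient u ξ‖ ^ 2)
      - (1 + ‖gradient u ξ‖ ^ 2) ^ ((3 : ℝ) / 2) * Real.exp (u ξ)
        * K (Real.exp (u ξ) • ξ)

/-- C⁰ a priori estimate (from the proof of Theorem 2): if `u` is a C², positively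
0-homogeneous solution of the vertical mean curvature equation for a positive continuous
`K` with `K(ξ) > (m−1)/‖ξ‖` for `‖ξ‖ < r₁` and `K(ξ) < (m−1)/‖ξ‖` for `‖ξ‖ > r₂`
(`0 < r₁ ≤ 1 ≤ r₂`), then `log r₁ ≤ u ≤ log r₂` on the unit sphere. -/
theorem c0_estimate_vertical_mean_curvature (m : ℕ) (hm : 2 ≤ m)
    (u K : EuclideanSpace ℝ (Fin m) → ℝ)
    (hu : ∀ x : EuclideanSpace ℝ (Fin m), x ≠ 0 → ContDiffAt ℝ 2 u x)
    (hhom : ∀ t : ℝ, 0 < t → ∀ x : EuclideanSpace ℝ (Fin m), x ≠ 0 → u (t • x) = u x)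
    (hKcont : ContinuousOn K {(0 : EuclideanSpace ℝ (Fin m))}ᶜ)
    (hKpos : ∀ x : EuclideanSpace ℝ (Fin m), x ≠ 0 → 0 < K x)
    (hsol : SolvesVerticalMeanCurvatureEq m u K)
    (r₁ r₂ : ℝ) (hr₁ : 0 < r₁) (hr₁1 : r₁ ≤ 1) (h1r₂ : 1 ≤ r₂)
    (hlow : ∀ ξ : EuclideanSpace ℝ (Fin m), ξ ≠ 0 → ‖ξ‖ < r₁ → (m - 1 : ℝ) / ‖ξ‖ < K ξ)
    (hhigh : ∀ ξ : EuclideanSpace ℝ (Fin m), r₂ < ‖ξ‖ → K ξ < (m - 1 : ℝ) / ‖ξ‖) :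
    ∀ ξ : EuclideanSpace ℝ (Fin m), ‖ξ‖ = 1 →
      Real.log r₁ ≤ u ξ ∧ u ξ ≤ Real.log r₂ := by
  have hnz : ∀ ξ : EuclideanSpace ℝ (Fin m), ‖ξ‖ = 1 → ξ ≠ 0 := by
    intro ξ h hzero
    rw [hzero, norm_zero] at h
    norm_num at h
  have hne : (Metric.sphere (0 : EuclideanSpace ℝ (Fin m)) 1).Nonempty := by
    refine ⟨EuclideanSpace.single (⟨0, by omega⟩ : Fin m) (1:ℝ), ?_⟩
    rw [mem_sphere_zero_iff_norm, EuclideanSpace.norm_single]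
    norm_num
  have hcont : ContinuousOn u (Metric.sphere (0 : EuclideanSpace ℝ (Fin m)) 1) := by
    intro ξ hξ
    exact ((hu ξ (hnz ξ (mem_sphere_zero_iff_norm.1 hξ))).continuousAt).continuousWithinAt
  obtain ⟨ξ₀, hξ₀S, hξ₀max⟩ := (isCompact_sphere (0 : EuclideanSpace ℝ (Fin m)) 1).exists_isMaxOn hne hcont
  obtain ⟨ξ₁, hξ₁S, hξ₁min⟩ := (isCompact_sphere (0 : EuclideanSpace ℝ (Fin m)) 1).exists_isMinOn hne hcont
  have h₀ : ‖ξ₀‖ = 1 := mem_sphere_zero_iff_norm.1 hξ₀S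
  have h₁ : ‖ξ₁‖ = 1 := mem_sphere_zero_iff_norm.1 hξ₁S
  -- positivity of norms near the sphere, and local extremality in the ambient space
  have hlocal : ∀ ξ : EuclideanSpace ℝ (Fin m), ‖ξ‖ = 1 →
      ∀ᶠ y in 𝓝 ξ, y ≠ 0 ∧ ∃ z, ‖z‖ = 1 ∧ u y = u z := by
    intro ξ hξ
    refine Metric.eventually_nhds_iff.2 ⟨1/2, by norm_num, fun y hy => ?_⟩
    have hdy : ‖ξ - y‖ < 1/2 := by
      rw [← dist_eq_norm, dist_comm]
      exact hy
    have habs := abs_norm_sub_norm_le ξ y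
    rw [hξ] at habs
    have h3 : |1 - ‖y‖| < 1/2 := lt_of_le_of_lt habs hdy
    have h4 := abs_lt.1 h3
    have hy0 : 0 < ‖y‖ := by linarith [h4.2]
    have hyne : y ≠ 0 := norm_pos_iff.1 hy0
    refine ⟨hyne, ‖y‖⁻¹ • y, ?_, ?_⟩
    · rw [norm_smul, norm_inv, norm_norm, inv_mul_cancel₀ (ne_of_gt hy0)]
    · exact (hhom ‖y‖⁻¹ (inv_pos.2 hy0) y hyne).symm
  have hlocmax : IsLocalMax u ξ₀ := by
    filter_upwards [hlocal ξ₀ h₀] with y hy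
    obtain ⟨-, z, hz1, hz2⟩ := hy
    rw [hz2]
    exact hξ₀max (mem_sphere_zero_iff_norm.2 hz1)
  have hlocmin : IsLocalMin u ξ₁ := by
    filter_upwards [hlocal ξ₁ h₁] with y hy
    obtain ⟨-, z, hz1, hz2⟩ := hy
    rw [hz2]
    exact hξ₁min (mem_sphere_zero_iff_norm.2 hz1)
  -- gradients vanish at the extrema
  have hgrad₀ : gradient u ξ₀ = 0 := by
    rw [gradient, hlocmax.fderiv_eq_zero, map_zero]
  have hgrad₁ : gradient u ξ₁ = 0 := by
    rw [gradient, hlocmin.fderiv_eq_zero, map_zero]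
  -- the equation at the extrema
  have heq₀ := hsol ξ₀ h₀
  have heq₁ := hsol ξ₁ h₁
  rw [hgrad₀] at heq₀
  rw [hgrad₁] at heq₁
  simp only [norm_zero, ne_eq, OfNat.ofNat_ne_zero, not_false_eq_true, zero_pow, add_zero,
    one_mul, map_zero, ContinuousLinearMap.zero_apply, Real.one_rpow, sub_zero] at heq₀ heq₁
  -- upper bound at the max point
  have hΔ₀ : (∑ i : Fin m, fderiv ℝ (fderiv ℝ u) ξ₀ (EuclideanSpace.single i 1)
      (EuclideanSpace.single i 1)) ≤ 0 :=
    Finset.sum_nonpos fun i _ =>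
      second_fderiv_nonpos_of_isLocalMax' (hu ξ₀ (hnz ξ₀ h₀)) hlocmax _
  have hΔ₁ : 0 ≤ (∑ i : Fin m, fderiv ℝ (fderiv ℝ u) ξ₁ (EuclideanSpace.single i 1)
      (EuclideanSpace.single i 1)) :=
    Finset.sum_nonneg fun i _ =>
      second_fderiv_nonneg_of_isLocalMin' (hu ξ₁ (hnz ξ₁ h₁)) hlocmin _
  have hP₀ : ‖Real.exp (u ξ₀) • ξ₀‖ = Real.exp (u ξ₀) := by
    rw [norm_smul, Real.norm_eq_abs, abs_of_pos (Real.exp_pos _), h₀, mul_one]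
  have hP₁ : ‖Real.exp (u ξ₁) • ξ₁‖ = Real.exp (u ξ₁) := by
    rw [norm_smul, Real.norm_eq_abs, abs_of_pos (Real.exp_pos _), h₁, mul_one]
  have hub : Real.exp (u ξ₀) ≤ r₂ := by
    by_contra hgt
    push_neg at hgt
    have h5 := hhigh (Real.exp (u ξ₀) • ξ₀) (by rw [hP₀]; exact hgt)
    rw [hP₀] at h5
    have h6 : K (Real.exp (u ξ₀) • ξ₀) * Real.exp (u ξ₀) < (m:ℝ) - 1 :=
      (lt_div_iff₀ (Real.exp_pos _)).1 h5
    rw [mul_comm] at h6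
    linarith [heq₀, hΔ₀]
  have hlb : r₁ ≤ Real.exp (u ξ₁) := by
    by_contra hlt
    push_neg at hlt
    have hPne : Real.exp (u ξ₁) • ξ₁ ≠ 0 :=
      smul_ne_zero (ne_of_gt (Real.exp_pos _)) (hnz ξ₁ h₁)
    have h5 := hlow (Real.exp (u ξ₁) • ξ₁) hPne (by rw [hP₁]; exact hlt)
    rw [hP₁] at h5
    have h6 : Real.exp (u ξ₁) * K (Real.exp (u ξ₁) • ξ₁) ≤ (m:ℝ) - 1 := by
      linarith [heq₁, hΔ₁]
    rw [mul_comm] at h6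
    have h7 : K (Real.exp (u ξ₁) • ξ₁) ≤ ((m:ℝ) - 1) / Real.exp (u ξ₁) :=
      (le_div_iff₀ (Real.exp_pos _)).2 h6
    linarith
  intro ξ hξ
  have hmem : ξ ∈ Metric.sphere (0 : EuclideanSpace ℝ (Fin m)) 1 :=
    mem_sphere_zero_iff_norm.2 hξ
  constructor
  · calc Real.log r₁ ≤ u ξ₁ := (Real.log_le_iff_le_exp hr₁).2 hlb
    _ ≤ u ξ := hξ₁min hmem
  · calc u ξ ≤ u ξ₀ := hξ₀max hmem
    _ ≤ Real.log r₂ := (Real.le_log_iff_exp_le (lt_of_lt_of_le one_pos h1r₂)).2 hub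
end

section
/- Let m ≥ 2 and let b > 1. Let K : ℝ^m \ {0} → (0, ∞) be a function satisfying K(ξ) ≥ b(m−1)/‖ξ‖ for every ξ ≠ 0. Then there exists no C² function u : ℝ^m \ {0} → ℝ, positively homogeneous of degree 0, solving the vertical mean curvature equation for K. -/
open Filter Topology Set

open Filter Topology Set

/-- 1D second derivative test. -/
lemma second_deriv_test_1d {g g' : ℝ → ℝ} {d : ℝ}
    (hg : ∀ᶠ t in 𝓝 (0:ℝ), HasDerivAt g (g' t) t)
    (hd : HasDerivAt g' d 0) (hmin : IsLocalMin g 0) : 0 ≤ d := by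
  by_contra hneg
  push_neg at hneg
  have h0 : g' 0 = 0 := by
    have h1 : deriv g 0 = 0 := hmin.deriv_eq_zero
    have h2 : deriv g 0 = g' 0 := hg.self_of_nhds.deriv
    linarith [h1, h2]
  have hslope : Tendsto (slope g' 0) (𝓝[≠] 0) (𝓝 d) :=
    hasDerivAt_iff_tendsto_slope.mp hd
  have hev : ∀ᶠ t in 𝓝[≠] (0:ℝ), slope g' 0 t < d / 2 :=
    hslope.eventually_lt_const (by linarith)
  rw [eventually_nhdsWithin_iff] at hev
  have hall : ∀ᶠ t in 𝓝 (0:ℝ),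
      HasDerivAt g (g' t) t ∧ g 0 ≤ g t ∧ (t ∈ ({0}ᶜ : Set ℝ) → slope g' 0 t < d / 2) :=
    hg.and (hmin.and hev)
  rcases Metric.eventually_nhds_iff.mp hall with ⟨ε, hε, hball⟩
  have hmem : ∀ t : ℝ, t ∈ Icc (0:ℝ) (ε/2) →
      HasDerivAt g (g' t) t ∧ g 0 ≤ g t ∧ (t ≠ 0 → slope g' 0 t < d / 2) := by
    intro t ht
    apply hball
    simp only [Real.dist_eq, sub_zero]
    rw [abs_of_nonneg ht.1]
    linarith [ht.2]
  have hanti : StrictAntiOn g (Icc (0:ℝ) (ε/2)) := by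
    apply strictAntiOn_of_deriv_neg (convex_Icc _ _)
    · intro t ht
      exact (hmem t ht).1.continuousAt.continuousWithinAt
    · intro t ht
      rw [interior_Icc] at ht
      have h1 := hmem t ⟨le_of_lt ht.1, le_of_lt ht.2⟩
      rw [h1.1.deriv]
      have hs := h1.2.2 (ne_of_gt ht.1)
      rw [slope_def_field] at hs
      have : (g' t - g' 0) / (t - 0) < d / 2 := hs
      rw [h0, sub_zero, sub_zero] at this
      have := (div_lt_iff₀ ht.1).mp this
      nlinarith [ht.1]
  have h1 : g (ε/2) < g 0 :=
    hanti (by constructor <;> [rfl; positivity]) ⟨by positivity, le_refl _⟩ (by positivity)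
  have h2 : g 0 ≤ g (ε/2) := (hmem (ε/2) ⟨by positivity, le_refl _⟩).2.1
  linarith

lemma hess_dir_nonneg {E : Type*} [NormedAddCommGroup E] [NormedSpace ℝ E]
    {u : E → ℝ} {ξ : E} (hu : ContDiffAt ℝ 2 u ξ) (hmin : IsLocalMin u ξ) (v : E) :
    0 ≤ fderiv ℝ (fderiv ℝ u) ξ v v := by
  set L : ℝ → E := fun t => ξ + t • v with hL
  have hL0 : L 0 = ξ := by simp [hL]
  have hLd : ∀ t : ℝ, HasDerivAt L v t := by
    intro t
    have h1 : HasDerivAt (fun s : ℝ => s • v) ((1:ℝ) • v) t :=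
      (hasDerivAt_id t).smul_const v
    rw [one_smul] at h1
    exact h1.const_add ξ
  have hLcont : Tendsto L (𝓝 0) (𝓝 ξ) := by
    have := (hLd 0).continuousAt.tendsto
    rwa [hL0] at this
  have hud : ∀ᶠ x in 𝓝 ξ, DifferentiableAt ℝ u x :=
    (hu.eventually (by norm_num)).mono fun x hx => hx.differentiableAt (by norm_num)
  have hg : ∀ᶠ t in 𝓝 (0:ℝ), HasDerivAt (fun t => u (L t)) (fderiv ℝ u (L t) v) t :=
    (hLcont.eventually hud).mono fun t ht => ht.hasFDerivAt.comp_hasDerivAt t (hLd t)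
  have hf' : DifferentiableAt ℝ (fderiv ℝ u) ξ :=
    (hu.fderiv_right (m := 1) (by norm_num)).differentiableAt (by norm_num)
  have hcomp : HasDerivAt (fun t => fderiv ℝ u (L t)) (fderiv ℝ (fderiv ℝ u) ξ v) 0 := by
    have hFD : HasFDerivAt (fderiv ℝ u) (fderiv ℝ (fderiv ℝ u) ξ) (L 0) := by
      rw [hL0]; exact hf'.hasFDerivAt
    exact hFD.comp_hasDerivAt 0 (hLd 0)
  have happ : HasDerivAt (fun t => fderiv ℝ u (L t) v) (fderiv ℝ (fderiv ℝ u) ξ v v) 0 := by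
    have := hcomp.clm_apply (hasDerivAt_const 0 v)
    simpa using this
  have hming : IsLocalMin (fun t => u (L t)) 0 := by
    have := hLcont.eventually hmin
    simpa [IsLocalMin, IsMinFilter, hL0] using this
  exact second_deriv_test_1d hg happ hming



/-- Nonexistence (§5.4, Remark 1, second claim): if `K > 0` satisfies
`K(ξ) ≥ b(m−1)/‖ξ‖` for some `b > 1` and all `ξ ≠ 0`, then there is no C²,
positively 0-homogeneous solution of the vertical mean curvature equation for `K`. -/
theorem nonexistence_large_K (m : ℕ) (hm : 2 ≤ m) (b : ℝ) (hb : 1 < b)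
    (K : EuclideanSpace ℝ (Fin m) → ℝ)
    (hKpos : ∀ ξ : EuclideanSpace ℝ (Fin m), ξ ≠ 0 → 0 < K ξ)
    (hKge : ∀ ξ : EuclideanSpace ℝ (Fin m), ξ ≠ 0 → b * (m - 1 : ℝ) / ‖ξ‖ ≤ K ξ) :
    ¬ ∃ u : EuclideanSpace ℝ (Fin m) → ℝ,
        (∀ x : EuclideanSpace ℝ (Fin m), x ≠ 0 → ContDiffAt ℝ 2 u x) ∧
        (∀ t : ℝ, 0 < t → ∀ x : EuclideanSpace ℝ (Fin m), x ≠ 0 → u (t • x) = u x) ∧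
        SolvesVerticalMeanCurvatureEq m u K := by
  rintro ⟨u, hC2, hhom, heq⟩
  haveI : Nonempty (Fin m) := ⟨⟨0, by omega⟩⟩
  -- the sphere is nonempty and compact
  have hne : (Metric.sphere (0:EuclideanSpace ℝ (Fin m)) 1).Nonempty :=
    NormedSpace.sphere_nonempty.mpr (by norm_num)
  have hcont : ContinuousOn u (Metric.sphere (0:EuclideanSpace ℝ (Fin m)) 1) := by
    intro x hx
    have hx0 : x ≠ 0 := by
      intro h
      rw [mem_sphere_zero_iff_norm, h] at hx
      simp at hx
    exact (hC2 x hx0).continuousAt.continuousWithinAt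
  obtain ⟨ξ, hξs, hminOn⟩ := (isCompact_sphere (0:EuclideanSpace ℝ (Fin m)) 1).exists_isMinOn hne hcont
  have hξ : ‖ξ‖ = 1 := mem_sphere_zero_iff_norm.mp hξs
  have hξ0 : ξ ≠ 0 := by intro h; rw [h] at hξ; simp at hξ
  -- ξ is a global min on the punctured space
  have hglobal : ∀ x : EuclideanSpace ℝ (Fin m), x ≠ 0 → u ξ ≤ u x := by
    intro x hx0
    have hnx : ‖x‖ ≠ 0 := norm_ne_zero_iff.mpr hx0
    have hy : (‖x‖⁻¹ • x : EuclideanSpace ℝ (Fin m)) ∈ Metric.sphere (0:EuclideanSpace ℝ (Fin m)) 1 := by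
      rw [mem_sphere_zero_iff_norm, norm_smul, norm_inv, norm_norm,
        inv_mul_cancel₀ hnx]
    have h1 : u (‖x‖⁻¹ • x) = u x :=
      hhom (‖x‖⁻¹) (by positivity) x hx0
    calc u ξ ≤ u (‖x‖⁻¹ • x) := hminOn hy
    _ = u x := h1
  have hlocal : IsLocalMin u ξ := by
    have hopen : ({(0:EuclideanSpace ℝ (Fin m))}ᶜ : Set (EuclideanSpace ℝ (Fin m))) ∈ 𝓝 ξ :=
      isOpen_compl_singleton.mem_nhds (by simpa using hξ0)
    exact Filter.eventually_of_mem hopen fun x hx => hglobal x (by simpa using hx)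
  -- gradient vanishes at ξ
  have hfd0 : fderiv ℝ u ξ = 0 := hlocal.fderiv_eq_zero
  have hgrad : gradient u ξ = 0 := by
    rw [gradient, hfd0, map_zero]
  -- Hessian diagonal nonneg
  have hhess : ∀ i : Fin m,
      0 ≤ fderiv ℝ (fderiv ℝ u) ξ (EuclideanSpace.single i 1) (EuclideanSpace.single i 1) :=
    fun i => hess_dir_nonneg (hC2 ξ hξ0) hlocal _
  have hsum : 0 ≤ ∑ i : Fin m, fderiv ℝ (fderiv ℝ u) ξ (EuclideanSpace.single i 1)
      (EuclideanSpace.single i 1) := Finset.sum_nonneg fun i _ => hhess i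
  -- the equation at ξ
  have hE := heq ξ hξ
  rw [hgrad] at hE
  simp only [norm_zero, map_zero, ContinuousLinearMap.zero_apply] at hE
  have h32 : ((1:ℝ) + 0 ^ 2) ^ ((3:ℝ)/2) = 1 := by norm_num
  rw [h32] at hE
  -- estimate K
  have hsξ : (Real.exp (u ξ) • ξ : EuclideanSpace ℝ (Fin m)) ≠ 0 :=
    smul_ne_zero (Real.exp_ne_zero _) hξ0
  have hnorm : ‖(Real.exp (u ξ) • ξ : EuclideanSpace ℝ (Fin m))‖ = Real.exp (u ξ) := by
    rw [norm_smul, hξ, mul_one, Real.norm_eq_abs, abs_of_pos (Real.exp_pos _)]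
  have hKb : b * (m - 1 : ℝ) ≤ Real.exp (u ξ) * K (Real.exp (u ξ) • ξ) := by
    have := hKge _ hsξ
    rw [hnorm, div_le_iff₀ (Real.exp_pos _)] at this
    linarith [this]
  have hm1 : (1:ℝ) ≤ (m - 1 : ℝ) := by
    have : (2:ℝ) ≤ (m:ℝ) := by exact_mod_cast hm
    linarith
  nlinarith [hE, hsum, hKb, hm1, hb]
end
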